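/- arXiv:1612.04142 — 2 statements merged into one kernel-verified Lean document; each statement's English description precedes it below -/
import Mathlib

section
/- Let β > 1 and s ∈ ℝ \ {0}. Define f(x) = (1 + |s|·e^x)^{−β} · exp(i·s·e^x) for x ∈ ℝ. Then ∫_ℝ |f′(x)| dx ≤ C where C depends only on β (not on s); in fact ∫_ℝ |f′(x)| dx ≤ β·∫₀^∞ (1+u)^{−(β+1)} du + ∫₀^∞ (1+u)^{−β} du, which is finite. -/
open Real Complex MeasureTheory

theorem stmt_2 (β : ℝ) (hβ : 1 < β) (s : ℝ) (hs : s ≠ 0)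
    (f : ℝ → ℂ)
    (hf : f = fun x : ℝ =>
      ((1 + |s| * Real.exp x : ℝ) : ℂ) ^ (-(β : ℂ)) * Complex.exp (Complex.I * s * Real.exp x)) :
    ∫ x : ℝ, ‖deriv f x‖ ≤
      β * (∫ u in Set.Ioi (0:ℝ), (1 + u) ^ (-(β + 1)))
        + ∫ u in Set.Ioi (0:ℝ), (1 + u) ^ (-β) := by
  have ha : (0:ℝ) < |s| := abs_pos.mpr hs
  set a := |s| with ha_def
  -- the derivative
  set F : ℝ → ℂ := fun x =>
    (-(β:ℂ)) * ((1 + a * Real.exp x : ℝ) : ℂ) ^ (-(β:ℂ) - 1) * ((a * Real.exp x : ℝ):ℂ)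
        * Complex.exp (Complex.I * s * Real.exp x)
      + ((1 + a * Real.exp x : ℝ) : ℂ) ^ (-(β : ℂ)) *
        (Complex.exp (Complex.I * s * Real.exp x) * (Complex.I * s * Real.exp x)) with hF
  have hD : ∀ x : ℝ, HasDerivAt f (F x) x := by
    intro x
    have hg : HasDerivAt (fun x : ℝ => (1 + a * Real.exp x : ℝ)) (a * Real.exp x) x := by
      simpa using ((Real.hasDerivAt_exp x).const_mul a).const_add 1
    have hpos : (0:ℝ) < 1 + a * Real.exp x := by positivity
    have hw : HasDerivAt (fun y : ℝ => ((y:ℂ)) ^ (-(β:ℂ)))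
        ((-(β:ℂ)) * ((1 + a * Real.exp x : ℝ):ℂ) ^ (-(β:ℂ) - 1)) (1 + a * Real.exp x) :=
      ((Complex.hasStrictDerivAt_cpow_const (Or.inl (by rw [Complex.ofReal_re]; exact hpos))).hasDerivAt).comp_ofReal
    have h1 : HasDerivAt (fun x : ℝ => ((1 + a * Real.exp x : ℝ) : ℂ) ^ (-(β:ℂ)))
        ((-(β:ℂ)) * ((1 + a * Real.exp x : ℝ) : ℂ) ^ (-(β:ℂ) - 1) * ((a * Real.exp x : ℝ):ℂ)) x := by
      have := HasDerivAt.scomp (𝕜 := ℝ) x hw hg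
      simpa [Function.comp_def, mul_comm, Complex.real_smul, mul_assoc] using this
    have hinner : HasDerivAt (fun x : ℝ => Complex.I * s * (Real.exp x : ℂ))
        (Complex.I * s * Real.exp x) x := by
      simpa using ((Real.hasDerivAt_exp x).ofReal_comp).const_mul (Complex.I * s)
    have h2 : HasDerivAt (fun x : ℝ => Complex.exp (Complex.I * s * Real.exp x))
        (Complex.exp (Complex.I * s * Real.exp x) * (Complex.I * s * Real.exp x)) x :=
      hinner.cexp
    rw [hf]
    exact h1.mul h2
  -- the bound function
  set G : ℝ → ℝ := fun u => β * (1+u) ^ (-(β+1)) + (1+u) ^ (-β) with hG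
  set b : ℝ → ℝ := fun x => a * Real.exp x * G (a * Real.exp x) with hb
  -- pointwise bound
  have hbound : ∀ x : ℝ, ‖deriv f x‖ ≤ b x := by
    intro x
    rw [(hD x).deriv]
    have hpos : (0:ℝ) < 1 + a * Real.exp x := by positivity
    have habs_exp : ‖Complex.exp (Complex.I * s * Real.exp x)‖ = 1 := by
      rw [Complex.norm_exp]
      simp [Complex.mul_re]
    have h1 : ‖(-(β:ℂ)) * ((1 + a * Real.exp x : ℝ) : ℂ) ^ (-(β:ℂ) - 1)
        * ((a * Real.exp x : ℝ):ℂ) * Complex.exp (Complex.I * s * Real.exp x)‖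
        = β * ((1 + a * Real.exp x) ^ (-(β+1)) * (a * Real.exp x)) := by
      rw [norm_mul, norm_mul, norm_mul, habs_exp,
        Complex.norm_cpow_eq_rpow_re_of_pos hpos]
      simp [abs_of_pos (by positivity : (0:ℝ) < a * Real.exp x),
        abs_of_pos (lt_trans zero_lt_one hβ), abs_of_pos ha]
      ring_nf
    have h2 : ‖((1 + a * Real.exp x : ℝ) : ℂ) ^ (-(β : ℂ)) *
        (Complex.exp (Complex.I * s * Real.exp x) * (Complex.I * s * Real.exp x))‖
        = (1 + a * Real.exp x) ^ (-β) * (a * Real.exp x) := by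
      rw [norm_mul, norm_mul, norm_mul, norm_mul, habs_exp,
        Complex.norm_cpow_eq_rpow_re_of_pos hpos]
      simp [Complex.norm_real, abs_of_pos (Real.exp_pos x), ha_def]
    calc ‖F x‖ ≤ _ + _ := norm_add_le _ _
      _ = β * ((1 + a * Real.exp x) ^ (-(β+1)) * (a * Real.exp x))
          + (1 + a * Real.exp x) ^ (-β) * (a * Real.exp x) := by rw [h1, h2]
      _ = b x := by simp only [hb, hG]; ring
  -- change of variables setup
  set φ : ℝ → ℝ := fun x => a * Real.exp x with hφdef
  have hφ : ∀ x ∈ (Set.univ : Set ℝ), HasDerivWithinAt φ (a * Real.exp x) Set.univ x :=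
    fun x _ => (((Real.hasDerivAt_exp x).const_mul a).hasDerivWithinAt)
  have hinj : Set.InjOn φ Set.univ := by
    have : StrictMono φ := fun x y hxy => by
      simp only [hφdef]
      exact mul_lt_mul_of_pos_left (Real.exp_lt_exp.mpr hxy) ha
    exact this.injective.injOn
  have himg : φ '' Set.univ = Set.Ioi 0 := by
    ext u
    simp only [Set.image_univ, Set.mem_range, Set.mem_Ioi]
    constructor
    · rintro ⟨x, rfl⟩; positivity
    · intro hu
      refine ⟨Real.log (u / a), ?_⟩
      simp only [hφdef]
      rw [Real.exp_log (by positivity)]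
      field_simp
  -- integrability of G on Ioi 0
  have hshift : ∀ p : ℝ, p < -1 → IntegrableOn (fun u : ℝ => (1+u) ^ p) (Set.Ioi 0) := by
    intro p hp
    have h0 : IntegrableOn (fun u : ℝ => u ^ p) (Set.Ioi 1) :=
      integrableOn_Ioi_rpow_of_lt hp one_pos
    have himg2 : (fun x : ℝ => 1 + x) '' Set.Ioi 0 = Set.Ioi 1 := by
      rw [Set.image_const_add_Ioi]; norm_num
    rw [← himg2, integrableOn_image_iff_integrableOn_abs_deriv_smul (f := fun x => 1 + x)
      (f' := fun _ => 1) measurableSet_Ioi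
      (fun x _ => by simpa using ((hasDerivAt_id x).const_add 1).hasDerivWithinAt)
      (add_right_injective 1).injOn] at h0
    simpa using h0
  have hIg1 : IntegrableOn (fun u : ℝ => (1+u) ^ (-(β+1))) (Set.Ioi 0) :=
    hshift _ (by linarith)
  have hIg2 : IntegrableOn (fun u : ℝ => (1+u) ^ (-β)) (Set.Ioi 0) :=
    hshift _ (by linarith)
  have hIG : IntegrableOn G (Set.Ioi 0) := (hIg1.const_mul β).add hIg2
  -- integrability of b
  have hIb : Integrable b := by
    have := (integrableOn_image_iff_integrableOn_abs_deriv_smul MeasurableSet.univ hφ hinj G)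
    rw [himg] at this
    have h2 := this.mp hIG
    rw [integrableOn_univ] at h2
    refine h2.congr (Filter.EventuallyEq.of_eq ?_)
    funext x
    simp [hb, hφdef, abs_of_pos (by positivity : (0:ℝ) < a * Real.exp x)]
  -- change of variables
  have hkey : ∫ x : ℝ, b x = ∫ u in Set.Ioi (0:ℝ), G u := by
    rw [← himg, integral_image_eq_integral_abs_deriv_smul MeasurableSet.univ hφ hinj G]
    rw [MeasureTheory.setIntegral_univ]
    congr 1
    funext x
    simp [hb, hφdef, abs_of_pos (by positivity : (0:ℝ) < a * Real.exp x)]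
  -- conclude
  calc ∫ x : ℝ, ‖deriv f x‖ ≤ ∫ x : ℝ, b x := by
        refine integral_mono_of_nonneg (Filter.Eventually.of_forall fun x => ?_) hIb
          (Filter.Eventually.of_forall hbound)
        exact norm_nonneg _
    _ = ∫ u in Set.Ioi (0:ℝ), G u := hkey
    _ = β * (∫ u in Set.Ioi (0:ℝ), (1 + u) ^ (-(β + 1)))
        + ∫ u in Set.Ioi (0:ℝ), (1 + u) ^ (-β) := by
        rw [hG, integral_add (hIg1.const_mul β) hIg2, integral_const_mul]
end

section
/- For θ ∈ (−π/2, π/2) and t > 0, the sequence a_n = exp(−t·e^{iθ}·2^{−n}) (n ≥ 1) satisfies ‖a‖_{BV} := sup_n |a_n| + Σ_{n=1}^∞ |a_n − a_{n+1}| ≤ C·(π/2 − |θ|)^{−1} for an absolute constant C. -/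
open Real Complex

lemma exp_diff_bound {a b : ℂ} {m : ℝ} (ha : a.re ≤ m) (hb : b.re ≤ m) :
    norm (Complex.exp a - Complex.exp b) ≤ Real.exp m * norm (a - b) := by
  have hconv : Convex ℝ {z : ℂ | z.re ≤ m} := convex_halfSpace_re_le m
  have hbound : ∀ x ∈ {z : ℂ | z.re ≤ m}, ‖fderiv ℂ Complex.exp x‖ ≤ Real.exp m := by
    intro x hx
    rw [(Complex.hasDerivAt_exp x).hasFDerivAt.fderiv]
    rw [ContinuousLinearMap.norm_toSpanSingleton, Complex.norm_exp]
    exact Real.exp_le_exp.2 hx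
  have := hconv.norm_image_sub_le_of_norm_fderiv_le
    (fun x _ => Complex.differentiable_exp.differentiableAt) hbound hb ha
  simpa using this

set_option maxHeartbeats 1000000 in
theorem stmt_11 :
    ∃ C : ℝ, 0 < C ∧ ∀ θ ∈ Set.Ioo (-(π/2)) (π/2), ∀ t : ℝ, 0 < t →
      (⨆ n : ℕ, norm
          (Complex.exp (-((t : ℂ) * Complex.exp (θ * Complex.I)) * (2:ℂ) ^ (-((n : ℤ) + 1)))))
        + ∑' n : ℕ,
            norm
              (Complex.exp (-((t : ℂ) * Complex.exp (θ * Complex.I)) * (2:ℂ) ^ (-((n : ℤ) + 1)))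
                - Complex.exp (-((t : ℂ) * Complex.exp (θ * Complex.I)) * (2:ℂ) ^ (-((n : ℤ) + 2))))
        ≤ C * (π/2 - |θ|)⁻¹ := by
  refine ⟨3 * π / 2, by positivity, ?_⟩
  intro θ hθ t ht
  obtain ⟨hθ1, hθ2⟩ := hθ
  set c := Real.cos θ with hc_def
  have hc : 0 < c := Real.cos_pos_of_mem_Ioo ⟨hθ1, hθ2⟩
  set z : ℂ := (t : ℂ) * Complex.exp (θ * Complex.I) with hz_def
  -- real part computation
  have hre : ∀ m : ℤ, (-z * (2:ℂ) ^ m).re = -(t * c * (2:ℝ) ^ m) := by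
    intro m
    have h2 : (2:ℂ) ^ m = (((2:ℝ) ^ m : ℝ) : ℂ) := by push_cast; ring
    rw [hz_def, h2]
    rw [show -((t:ℂ) * Complex.exp (θ * Complex.I)) * (((2:ℝ)^m : ℝ) : ℂ)
        = ((-(t * (2:ℝ)^m) : ℝ) : ℂ) * Complex.exp (θ * Complex.I) by push_cast; ring]
    rw [Complex.re_ofReal_mul, Complex.exp_ofReal_mul_I_re]
    ring
  have habs : ∀ m : ℤ, norm (-z * (2:ℂ) ^ m) = t * (2:ℝ) ^ m := by
    intro m
    have h2 : (2:ℂ) ^ m = (((2:ℝ) ^ m : ℝ) : ℂ) := by push_cast; ring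
    rw [hz_def, h2, norm_mul, norm_neg, norm_mul, Complex.norm_exp_ofReal_mul_I]
    simp [Complex.norm_real, abs_of_pos ht, _root_.abs_of_nonneg (by positivity : (0:ℝ) ≤ (2:ℝ)^m)]
  -- sup bound
  have hsup : (⨆ n : ℕ, norm (Complex.exp (-z * (2:ℂ) ^ (-((n : ℤ) + 1))))) ≤ 1 := by
    refine ciSup_le fun n => ?_
    rw [Complex.norm_exp, hre]
    rw [Real.exp_le_one_iff]
    have : (0:ℝ) ≤ t * c * (2:ℝ) ^ (-((n:ℤ)+1)) := by positivity
    linarith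
  -- the telescoping majorant
  set B : ℕ → ℝ := fun n => Real.exp (-(c * t * (2:ℝ) ^ (-(n : ℤ) - 2))) with hB_def
  have hBmono : Monotone B := by
    intro a b hab
    apply Real.exp_le_exp.2
    have : (2:ℝ) ^ (-(b:ℤ) - 2) ≤ (2:ℝ) ^ (-(a:ℤ) - 2) := by
      apply zpow_le_zpow_right₀ (by norm_num)
      omega
    have h := mul_le_mul_of_nonneg_left this (mul_pos hc ht).le
    linarith
  have hBtend : Filter.Tendsto B Filter.atTop (nhds 1) := by
    have h1 : Filter.Tendsto (fun n : ℕ => (2:ℝ) ^ (-(n:ℤ) - 2)) Filter.atTop (nhds 0) := by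
      have : ∀ n : ℕ, (2:ℝ) ^ (-(n:ℤ) - 2) = (1/4) * (1/2 : ℝ) ^ n := by
        intro n
        rw [show -(n:ℤ) - 2 = -(((n+2 : ℕ) : ℤ)) by push_cast; ring]
        rw [zpow_neg, zpow_natCast, ← inv_pow, pow_add]
        norm_num
        ring
      simp only [this]
      have := tendsto_pow_atTop_nhds_zero_of_lt_one (by norm_num : (0:ℝ) ≤ 1/2) (by norm_num)
      simpa using this.const_mul (1/4 : ℝ)
    have h2 : Filter.Tendsto (fun n : ℕ => -(c * t * (2:ℝ) ^ (-(n:ℤ) - 2)))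
        Filter.atTop (nhds 0) := by
      have := (h1.const_mul (c * t)).neg
      simpa using this
    have := (Real.continuous_exp.tendsto 0).comp h2
    simpa using (by exact this : Filter.Tendsto B Filter.atTop (nhds (Real.exp 0)))
  have hBsum : HasSum (fun n => B (n+1) - B n) (1 - B 0) := by
    rw [hasSum_iff_tendsto_nat_of_nonneg (fun n => sub_nonneg.2 (hBmono (Nat.le_succ n)))]
    have : ∀ N : ℕ, ∑ i ∈ Finset.range N, (B (i+1) - B i) = B N - B 0 :=
      fun N => Finset.sum_range_sub B N
    simp only [this]
    exact hBtend.sub_const (B 0)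
  -- pointwise bound on differences
  have hfg : ∀ n : ℕ,
      norm (Complex.exp (-z * (2:ℂ) ^ (-((n : ℤ) + 1)))
        - Complex.exp (-z * (2:ℂ) ^ (-((n : ℤ) + 2))))
      ≤ (2 / c) * (B (n+1) - B n) := by
    intro n
    set x : ℝ := (2:ℝ) ^ (-(n:ℤ) - 2) with hx_def
    have hx : 0 < x := by positivity
    have hdiff : norm (Complex.exp (-z * (2:ℂ) ^ (-((n : ℤ) + 1)))
        - Complex.exp (-z * (2:ℂ) ^ (-((n : ℤ) + 2))))
        ≤ Real.exp (-(c * t * x)) * (t * x) := by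
      have h1 : (-z * (2:ℂ) ^ (-((n : ℤ) + 1))).re ≤ -(c * t * x) := by
        rw [hre]
        have h21 : (2:ℝ) ^ (-(n:ℤ) - 2) ≤ (2:ℝ) ^ (-((n:ℤ) + 1)) := by
          apply zpow_le_zpow_right₀ (by norm_num); omega
        rw [← hx_def] at h21
        have h22 := mul_le_mul_of_nonneg_left h21 (mul_pos ht hc).le
        linarith
      have h2 : (-z * (2:ℂ) ^ (-((n : ℤ) + 2))).re ≤ -(c * t * x) := by
        rw [hre]
        have : -((n:ℤ) + 2) = -(n:ℤ) - 2 := by ring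
        rw [this, ← hx_def]
        linarith
      have key := exp_diff_bound h1 h2
      have hab : norm (-z * (2:ℂ) ^ (-((n : ℤ) + 1)) - -z * (2:ℂ) ^ (-((n : ℤ) + 2)))
          = t * x := by
        have : -z * (2:ℂ) ^ (-((n : ℤ) + 1)) - -z * (2:ℂ) ^ (-((n : ℤ) + 2))
            = -z * (2:ℂ) ^ (-((n : ℤ) + 2)) := by
          have e1 : (2:ℂ) ^ (-((n : ℤ) + 1)) = 2 * (2:ℂ) ^ (-((n : ℤ) + 2)) := by
            rw [show -((n:ℤ)+1) = 1 + -((n:ℤ)+2) by ring,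
              zpow_add₀ (by norm_num : (2:ℂ) ≠ 0), zpow_one]
          rw [e1]; ring
        rw [this, habs]
        congr 1
        rw [hx_def]
        congr 1
        omega
      rw [hab] at key
      exact key
    refine hdiff.trans ?_
    -- t x e^{-ctx} ≤ (2/c)(e^{-ctx/2} - e^{-ctx})
    have hB1 : B (n+1) = Real.exp (-(c * t * x / 2)) := by
      have hxx : (2:ℝ) ^ (-(((n+1:ℕ)):ℤ) - 2) = x / 2 := by
        rw [hx_def]
        rw [show -(((n+1:ℕ)):ℤ) - 2 = (-(n:ℤ) - 2) + (-1) by push_cast; ring]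
        rw [zpow_add₀ (by norm_num : (2:ℝ) ≠ 0), zpow_neg_one]
        ring
      rw [hB_def]
      simp only [hxx]
      ring_nf
    have hB0 : B n = Real.exp (-(c * t * x)) := by
      rw [hB_def]
    rw [hB1, hB0]
    have hu : 0 < c * t * x := by positivity
    set u := c * t * x with hu_def
    -- need: e^{-u} * (t x) ≤ (2/c)(e^{-u/2} - e^{-u})
    -- i.e. u e^{-u} ≤ 2 (e^{-u/2} - e^{-u}), i.e. u ≤ 2(e^{u/2} - 1)
    have hexp : u / 2 + 1 ≤ Real.exp (u / 2) := Real.add_one_le_exp (u / 2)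
    have hsplit : Real.exp (-(u/2)) - Real.exp (-u) = Real.exp (-u) * (Real.exp (u/2) - 1) := by
      rw [mul_sub, ← Real.exp_add]
      ring_nf
    have hepos : 0 < Real.exp (-u) := Real.exp_pos _
    have key : u * Real.exp (-u) ≤ 2 * (Real.exp (-(u/2)) - Real.exp (-u)) := by
      rw [hsplit]
      nlinarith
    have htx : t * x = u / c := by rw [hu_def]; field_simp
    rw [htx]
    calc Real.exp (-u) * (u / c) = (u * Real.exp (-u)) / c := by ring
      _ ≤ (2 * (Real.exp (-(u/2)) - Real.exp (-u))) / c := by gcongr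
      _ = 2 / c * (Real.exp (-(u/2)) - Real.exp (-u)) := by ring
  have hgsum : HasSum (fun n => (2 / c) * (B (n+1) - B n)) ((2/c) * (1 - B 0)) :=
    hBsum.mul_left _
  have hfsummable : Summable (fun n : ℕ =>
      norm (Complex.exp (-z * (2:ℂ) ^ (-((n : ℤ) + 1)))
        - Complex.exp (-z * (2:ℂ) ^ (-((n : ℤ) + 2))))) :=
    Summable.of_nonneg_of_le (fun n => norm_nonneg _) hfg hgsum.summable
  have htsum : (∑' n : ℕ,
      norm (Complex.exp (-z * (2:ℂ) ^ (-((n : ℤ) + 1)))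
        - Complex.exp (-z * (2:ℂ) ^ (-((n : ℤ) + 2))))) ≤ 2 / c := by
    refine le_trans (hfsummable.tsum_le_tsum hfg hgsum.summable) ?_
    rw [hgsum.tsum_eq]
    have hB0pos : 0 < B 0 := Real.exp_pos _
    have : (0:ℝ) < 2 / c := by positivity
    nlinarith
  -- combine
  set d := π/2 - |θ| with hd_def
  have habsθ : |θ| < π / 2 := abs_lt.mpr ⟨hθ1, hθ2⟩
  have hd : 0 < d := by rw [hd_def]; linarith
  have hdle : d ≤ π / 2 := by
    rw [hd_def]; have := abs_nonneg θ; linarith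
  have hπ : 0 < π := Real.pi_pos
  have hcd : 2 * d ≤ π * c := by
    have ha := Real.one_sub_mul_le_cos (abs_nonneg θ) habsθ.le
    rw [Real.cos_abs] at ha
    have hmul := mul_le_mul_of_nonneg_left ha hπ.le
    have he : π * (1 - 2 / π * |θ|) = π - 2 * |θ| := by field_simp
    rw [he] at hmul
    rw [hd_def]
    linarith
  have h1 : (1:ℝ) ≤ (π/2) * d⁻¹ := by
    rw [← div_eq_mul_inv, le_div_iff₀ hd]; linarith
  have h2 : 2 / c ≤ π * d⁻¹ := by
    rw [← div_eq_mul_inv, div_le_div_iff₀ hc hd]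
    exact hcd
  calc _ ≤ (1:ℝ) + 2 / c := add_le_add hsup htsum
    _ ≤ 3 * π / 2 * d⁻¹ := by linarith
end
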